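/- arXiv:1303.1346 — 2 statements merged into one kernel-verified Lean document; each statement's English description precedes it below -/
import Mathlib

section
/- Let n > 1 be an integer and let p(x) = x^n + a_{n−1}x^{n−1} + ... + a_2 x^2 + a_1 x + (−1)^{n+1} be a polynomial with integer coefficients a_1, ..., a_{n−1} satisfying |a_{n−1}| > |a_{n−2}| + ... + |a_2| + |a_1| + 2, and let θ_1, θ_2, ..., θ_n ∈ ℂ be the roots of p. Then θ_1 · θ_2 · ... · θ_n = −1, and if for some integers d_1, d_2, ..., d_n one has θ_1^{d_1} · θ_2^{d_2} · ... · θ_n^{d_n} = 1, then there exists an integer z such that d_1 = d_2 = ... = d_n = 2z. -/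
open Polynomial

/-- The polynomial `p(x) = x^n + a_{n-1} x^{n-1} + ⋯ + a_2 x^2 + a_1 x + (-1)^{n+1}`
with integer coefficients. -/
noncomputable def pisotPoly (n : ℕ) (a : ℕ → ℤ) : Polynomial ℤ :=
  X ^ n + ∑ i ∈ Finset.Ico 1 n, C (a i) * X ^ i + C ((-1 : ℤ) ^ (n + 1))

lemma pisot_coeff (n : ℕ) (hn : 1 < n) (a : ℕ → ℤ) (k : ℕ) :
    (pisotPoly n a).coeff k =
      if k = n then 1 else if k = 0 then (-1)^(n+1) else if k < n then a k else 0 := by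
  unfold pisotPoly
  rw [coeff_add, coeff_add, coeff_X_pow, finset_sum_coeff, coeff_C]
  simp_rw [coeff_C_mul, coeff_X_pow, mul_ite, mul_one, mul_zero]
  obtain h | hk := eq_or_ne k n
  · rw [Finset.sum_eq_zero (fun i hi => by
      rw [Finset.mem_Ico] at hi; exact if_neg (show ¬ k = i by omega))]
    rw [if_pos h, if_pos h, if_neg (show ¬ k = 0 by omega)]; ring
  · rcases eq_or_ne k 0 with rfl | hk0
    · rw [Finset.sum_eq_zero (fun i hi => by
        rw [Finset.mem_Ico] at hi; exact if_neg (show ¬ _ = i by omega))]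
      simp [(show ¬ ((0:ℕ) = n) by omega)]
    · rcases lt_or_ge k n with hkn | hkn
      · rw [Finset.sum_eq_single k (fun i hi hik => if_neg (fun h => hik h.symm))
          (fun h => absurd (Finset.mem_Ico.mpr ⟨by omega, hkn⟩) h)]
        simp [hk, hk0, hkn]
      · rw [Finset.sum_eq_zero (fun i hi => by
          rw [Finset.mem_Ico] at hi; exact if_neg (show ¬ (k = i) by omega))]
        simp [hk, hk0, (show ¬ k < n by omega)]

lemma pisot_monic (n : ℕ) (hn : 1 < n) (a : ℕ → ℤ) : (pisotPoly n a).Monic := by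
  have h1 : (pisotPoly n a).natDegree ≤ n := by
    unfold pisotPoly
    apply natDegree_add_le_of_degree_le
    · apply natDegree_add_le_of_degree_le (by simp)
      apply Polynomial.natDegree_sum_le_of_forall_le
      intro i hi
      exact (natDegree_C_mul_le _ _).trans (by simp [Finset.mem_Ico.mp hi |>.2.le])
    · simp [(by omega : 0 ≤ n)]
  have h2 : (pisotPoly n a).coeff n = 1 := by rw [pisot_coeff n hn a]; simp
  have h3 : (pisotPoly n a).natDegree = n := by
    refine le_antisymm h1 (le_of_not_gt fun h => ?_)
    rw [coeff_eq_zero_of_natDegree_lt h] at h2; norm_num at h2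
  unfold Monic leadingCoeff
  rw [h3, h2]

lemma pisot_natDegree (n : ℕ) (hn : 1 < n) (a : ℕ → ℤ) : (pisotPoly n a).natDegree = n := by
  have h1 : (pisotPoly n a).natDegree ≤ n := by
    unfold pisotPoly
    apply natDegree_add_le_of_degree_le
    · apply natDegree_add_le_of_degree_le (by simp)
      apply Polynomial.natDegree_sum_le_of_forall_le
      intro i hi
      exact (natDegree_C_mul_le _ _).trans (by simp [Finset.mem_Ico.mp hi |>.2.le])
    · simp [(by omega : 0 ≤ n)]
  have h2 : (pisotPoly n a).coeff n = 1 := by rw [pisot_coeff n hn a]; simp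
  refine le_antisymm h1 (le_of_not_gt fun h => ?_)
  rw [coeff_eq_zero_of_natDegree_lt h] at h2; norm_num at h2

section
variable (n : ℕ) (a : ℕ → ℤ)

lemma pisot_map_eval (z : ℂ) :
    eval z ((pisotPoly n a).map (Int.castRingHom ℂ)) =
      z ^ n + ∑ i ∈ Finset.Ico 1 n, (a i : ℂ) * z ^ i + (-1 : ℂ) ^ (n + 1) := by
  simp [pisotPoly, Polynomial.map_add, Polynomial.map_pow, Polynomial.map_sum,
    Polynomial.map_mul, eval_finset_sum]

lemma pisot_root_ineq (hn : 1 < n)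
    (ha : (∑ i ∈ Finset.Ico 1 (n - 1), |a i|) + 2 < |a (n - 1)|)
    (z : ℂ) (hz : eval z ((pisotPoly n a).map (Int.castRingHom ℂ)) = 0)
    (h1 : 1 ≤ ‖z‖) :
    (|a (n-1)| : ℝ) * ‖z‖ ≤ ‖z‖^2 + (|a (n-1)| : ℝ) - 2 := by
  obtain ⟨m, rfl⟩ : ∃ m, n = m + 2 := ⟨n - 2, by omega⟩
  rw [pisot_map_eval] at hz
  set t : ℝ := ‖z‖ with ht
  have ht0 : (0:ℝ) < t := lt_of_lt_of_le one_pos h1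
  have hsplit : ∑ i ∈ Finset.Ico 1 (m+2), (a i : ℂ) * z ^ i
      = (∑ i ∈ Finset.Ico 1 (m+1), (a i : ℂ) * z ^ i) + (a (m+1) : ℂ) * z ^ (m+1) :=
    Finset.sum_Ico_succ_top (by omega) _
  have key : (a (m+1) : ℂ) * z ^ (m+1)
      = -(z ^ (m+2) + (∑ i ∈ Finset.Ico 1 (m+1), (a i : ℂ) * z ^ i) + (-1:ℂ)^(m+2+1)) := by
    rw [hsplit] at hz; linear_combination hz
  have hnorm : (|a (m+1)| : ℝ) * t ^ (m+1)
      ≤ t ^ (m+2) + (∑ i ∈ Finset.Ico 1 (m+1), (|a i| : ℝ) * t ^ i) + 1 := by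
    have h2 : ‖(a (m+1) : ℂ) * z ^ (m+1)‖ = (|a (m+1)| : ℝ) * t ^ (m+1) := by
      rw [norm_mul, norm_pow, Complex.norm_intCast, ht]
    rw [← h2, key, norm_neg]
    refine (norm_add_le _ _).trans ?_
    gcongr
    · refine (norm_add_le _ _).trans ?_
      gcongr
      · exact le_of_eq (norm_pow _ _)
      · refine (norm_sum_le _ _).trans ?_
        refine Finset.sum_le_sum fun i hi => ?_
        rw [norm_mul, norm_pow, Complex.norm_intCast, ht]
    · rw [norm_pow, norm_neg, norm_one, one_pow]
  have hsum : (∑ i ∈ Finset.Ico 1 (m+1), (|a i| : ℝ) * t ^ i)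
      ≤ (∑ i ∈ Finset.Ico 1 (m+1), (|a i| : ℝ)) * t ^ m := by
    rw [Finset.sum_mul]
    refine Finset.sum_le_sum fun i hi => ?_
    rw [Finset.mem_Ico] at hi
    have : t ^ i ≤ t ^ m := pow_le_pow_right₀ h1 (by omega)
    have h0 : (0:ℝ) ≤ (|a i| : ℝ) := by positivity
    exact mul_le_mul_of_nonneg_left this h0
  have hsb : (∑ i ∈ Finset.Ico 1 (m+1), (|a i| : ℝ)) ≤ (|a (m+1)| : ℝ) - 3 := by
    have h := ha
    simp only [show m + 2 - 1 = m + 1 from by omega] at h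
    have h2 : ((∑ i ∈ Finset.Ico 1 (m+1), |a i| : ℤ) : ℝ) + 3 ≤ ((|a (m+1)| : ℤ) : ℝ) := by
      exact_mod_cast (show (∑ i ∈ Finset.Ico 1 (m+1), |a i|) + 3 ≤ |a (m+1)| by linarith)
    push_cast at h2 ⊢
    linarith
  have hone : (1:ℝ) ≤ t ^ m := one_le_pow₀ h1
  have main : (|a (m+1)| : ℝ) * t ^ (m+1) ≤ t^(m+2) + ((|a (m+1)| : ℝ) - 2) * t ^ m := by
    have h3 : (0:ℝ) ≤ (|a (m+1)| : ℝ) - 3 := by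
      have h4 : (0:ℝ) ≤ ∑ i ∈ Finset.Ico 1 (m+1), (|a i| : ℝ) :=
        Finset.sum_nonneg fun i _ => by positivity
      linarith
    calc (|a (m+1)| : ℝ) * t ^ (m+1) ≤ t ^ (m+2) + (∑ i ∈ Finset.Ico 1 (m+1), (|a i| : ℝ) * t ^ i) + 1 := hnorm
    _ ≤ t ^ (m+2) + ((|a (m+1)| : ℝ) - 3) * t ^ m + t ^ m := by
        have := hsum.trans (mul_le_mul_of_nonneg_right hsb (by positivity))
        linarith
    _ = t^(m+2) + ((|a (m+1)| : ℝ) - 2) * t ^ m := by ring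
  have hpow : (0:ℝ) < t ^ m := by positivity
  have := main
  rw [show (m+1) = m + 1 from rfl, pow_succ, show (m+2) = m + 2 from rfl] at this
  have h5 : (|a (m+1)| : ℝ) * (t ^ m * t) ≤ t ^ 2 * t ^ m + ((|a (m+1)| : ℝ) - 2) * t ^ m := by
    rw [show t ^ (m+2) = t ^ 2 * t ^ m by ring] at this; linarith
  have h6 : ((|a (m+1)| : ℝ) * t) * t ^ m ≤ (t ^ 2 + (|a (m+1)| : ℝ) - 2) * t ^ m := by
    nlinarith [hpow]
  have := le_of_mul_le_mul_right (by linarith [h6] : ((|a (m+1)| : ℝ) * t) * t ^ m ≤ (t ^ 2 + (|a (m+1)| : ℝ) - 2) * t ^ m) hpow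
  simpa [show m + 2 - 1 = m + 1 by omega] using this

lemma pisot_root_norm_ne_one (hn : 1 < n)
    (ha : (∑ i ∈ Finset.Ico 1 (n - 1), |a i|) + 2 < |a (n - 1)|)
    (z : ℂ) (hz : eval z ((pisotPoly n a).map (Int.castRingHom ℂ)) = 0) :
    ‖z‖ ≠ 1 := by
  intro h1
  have := pisot_root_ineq n a hn ha z hz (le_of_eq h1.symm)
  rw [h1] at this
  norm_num at this
  linarith
end

lemma pisot_cofactor_small (n : ℕ) (a : ℕ → ℤ) (hn : 1 < n)
    (ha : (∑ i ∈ Finset.Ico 1 (n - 1), |a i|) + 2 < |a (n - 1)|)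
    (z : ℂ) (g : Polynomial ℂ)
    (hfac : (pisotPoly n a).map (Int.castRingHom ℂ) = (X - C z) * g)
    (ht : 1 < ‖z‖) (w : ℂ) (hw : g.eval w = 0) : ‖w‖ < 1 := by
  obtain ⟨m, rfl⟩ : ∃ m, n = m + 2 := ⟨n - 2, by omega⟩
  set Q := (pisotPoly (m+2) a).map (Int.castRingHom ℂ) with hQ
  set t : ℝ := ‖z‖ with htdef
  have ht0 : (0:ℝ) < t := lt_trans one_pos ht
  have hQmonic : Q.Monic := (pisot_monic _ hn a).map _
  have hQdeg : Q.natDegree = m + 2 := by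
    rw [hQ, Monic.natDegree_map (pisot_monic _ hn a), pisot_natDegree _ hn a]
  have hgmonic : g.Monic := by
    have h := hQmonic; rw [hfac] at h
    exact (monic_X_sub_C z).of_mul_monic_left h
  have hgdeg : g.natDegree = m + 1 := by
    have h := hQdeg
    rw [hfac, (monic_X_sub_C z).natDegree_mul hgmonic, natDegree_X_sub_C] at h
    omega
  have hQc : ∀ k, Q.coeff k = (((pisotPoly (m+2) a).coeff k : ℤ) : ℂ) := fun k => coeff_map _ _
  have hfac' : Q = g * (X - C z) := by rw [hfac, mul_comm]
  have hrec : ∀ i : ℕ, Q.coeff (i+1) = g.coeff i - g.coeff (i+1) * z := by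
    intro i; rw [hfac']; exact coeff_mul_X_sub_C
  set c : ℕ → ℝ := fun i => ‖g.coeff i‖ with hcdef
  have hc0n : c 0 * t = 1 := by
    have h1 : Q.coeff 0 = (-1 : ℂ)^(m+2+1) := by
      rw [hQc, pisot_coeff _ hn a]; norm_num
    have h2 : ‖Q.coeff 0‖ = 1 := by rw [h1, norm_pow, norm_neg, norm_one, one_pow]
    have hc0 : Q.coeff 0 = g.coeff 0 * (0 - z) := by
      rw [hfac', mul_coeff_zero]; simp
    rw [hc0, norm_mul, zero_sub, norm_neg] at h2
    exact h2
  set S : ℝ := ∑ i ∈ Finset.range (m+1), c i with hSdef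
  have hcm1 : g.coeff (m+1) = 1 := by
    have h := hgmonic; rw [Monic, leadingCoeff, hgdeg] at h; exact h
  have hQtop : (a (m+1) : ℂ) = g.coeff m - z := by
    have h1 : Q.coeff (m+1) = (a (m+1) : ℂ) := by
      rw [hQc, pisot_coeff _ hn a]
      rw [if_neg (by omega), if_neg (by omega), if_pos (by omega)]
    rw [← h1, hrec m, hcm1, one_mul]
  have hA : (|(a (m+1) : ℝ)|) ≤ c m + t := by
    have : ‖(a (m+1) : ℂ)‖ = |(a (m+1) : ℝ)| := Complex.norm_intCast _
    rw [← this, hQtop]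
    exact norm_sub_le _ _
  have hmid : ∀ j ∈ Finset.range m, t * c (j+1) ≤ c j + |(a (j+1) : ℝ)| := by
    intro j hj
    rw [Finset.mem_range] at hj
    have h1 : Q.coeff (j+1) = (a (j+1) : ℂ) := by
      rw [hQc, pisot_coeff _ hn a]
      rw [if_neg (by omega), if_neg (by omega), if_pos (by omega)]
    have h2 : g.coeff (j+1) * z = g.coeff j - (a (j+1) : ℂ) := by
      rw [← h1, hrec j]; ring
    have h3 : ‖g.coeff (j+1) * z‖ ≤ c j + |(a (j+1) : ℝ)| := by
      rw [h2]
      refine (norm_sub_le _ _).trans ?_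
      rw [Complex.norm_intCast]
    calc t * c (j+1) = ‖g.coeff (j+1) * z‖ := by rw [norm_mul]; ring
    _ ≤ _ := h3
  -- sum up
  have hsum1 : ∑ j ∈ Finset.range m, c (j+1) = S - c 0 := by
    rw [hSdef, Finset.sum_range_succ' (fun i => c i) m]; ring
  have hsum2 : ∑ j ∈ Finset.range m, c j = S - c m := by
    rw [hSdef, Finset.sum_range_succ]; ring
  have hsb : ∑ j ∈ Finset.range m, |(a (j+1) : ℝ)| ≤ |(a (m+1) : ℝ)| - 3 := by
    have h := ha
    simp only [show m + 2 - 1 = m + 1 from by omega] at h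
    have h2 : ((∑ i ∈ Finset.Ico 1 (m+1), |a i| : ℤ) : ℝ) + 3 ≤ ((|a (m+1)| : ℤ) : ℝ) := by
      exact_mod_cast (show (∑ i ∈ Finset.Ico 1 (m+1), |a i|) + 3 ≤ |a (m+1)| by linarith)
    rw [show (∑ i ∈ Finset.Ico 1 (m+1), |a i|) = ∑ j ∈ Finset.range m, |a (1+j)| from by
      rw [Finset.sum_Ico_eq_sum_range]; norm_num] at h2
    push_cast at h2
    simp only [add_comm 1] at h2
    linarith
  have hkey : t * S - 1 ≤ S + t - 3 := by
    have h1 : ∑ j ∈ Finset.range m, t * c (j+1) ≤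
        ∑ j ∈ Finset.range m, (c j + |(a (j+1) : ℝ)|) := Finset.sum_le_sum hmid
    rw [← Finset.mul_sum, hsum1, Finset.sum_add_distrib, hsum2] at h1
    have h2 : t * (S - c 0) ≤ S - c m + (|(a (m+1) : ℝ)| - 3) := le_trans h1 (by linarith)
    have h3 : t * (S - c 0) ≤ S - c m + (c m + t - 3) := le_trans h2 (by linarith)
    have h4 : t * c 0 = 1 := by rw [mul_comm]; exact hc0n
    nlinarith [h4]
  have hS1 : S < 1 := by
    have h1 : (t - 1) * S ≤ t - 2 := by nlinarith
    have h2 : (t - 1) * S < (t - 1) * 1 := by linarith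
    exact lt_of_mul_lt_mul_left h2 (by linarith)
  -- root bound
  by_contra hcon
  push_neg at hcon
  have hw1 : (1:ℝ) ≤ ‖w‖ := hcon
  have heval : g.eval w = ∑ i ∈ Finset.range (m+1), g.coeff i * w ^ i + w ^ (m+1) := by
    rw [eval_eq_sum_range, hgdeg, Finset.sum_range_succ, hcm1, one_mul]
  have hweq : w ^ (m+1) = -∑ i ∈ Finset.range (m+1), g.coeff i * w ^ i := by
    rw [heval] at hw; linear_combination hw
  have hb : ‖w‖ ^ (m+1) ≤ S * ‖w‖ ^ m := by
    rw [← norm_pow, hweq, norm_neg]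
    refine (norm_sum_le _ _).trans ?_
    rw [hSdef, Finset.sum_mul]
    refine Finset.sum_le_sum fun i hi => ?_
    rw [Finset.mem_range] at hi
    rw [norm_mul, norm_pow]
    exact mul_le_mul_of_nonneg_left (pow_le_pow_right₀ hw1 (by omega)) (norm_nonneg _)
  have hwm : (0:ℝ) < ‖w‖ ^ m := by positivity
  have : ‖w‖ ^ (m+1) < ‖w‖ ^ m := lt_of_le_of_lt hb (by nlinarith)
  have h2 : ‖w‖ ^ m ≤ ‖w‖ ^ (m+1) := pow_le_pow_right₀ hw1 (by omega)
  linarith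

section
variable (n : ℕ) (a : ℕ → ℤ) (θ : Fin n → ℂ)

lemma pisot_fac (hn : 1 < n)
    (hθ : ((pisotPoly n a).map (Int.castRingHom ℂ)).roots = Multiset.map θ Finset.univ.val) :
    (pisotPoly n a).map (Int.castRingHom ℂ) = ∏ i, (X - C (θ i)) := by
  have hmon : ((pisotPoly n a).map (Int.castRingHom ℂ)).Monic := (pisot_monic _ hn a).map _
  have hsp : ((pisotPoly n a).map (Int.castRingHom ℂ)).Splits :=
    IsAlgClosed.splits _
  have h := hsp.eq_prod_roots_of_monic hmon
  rw [hθ] at h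
  rw [h, Multiset.map_map]
  rfl

lemma pisot_root (hn : 1 < n)
    (hθ : ((pisotPoly n a).map (Int.castRingHom ℂ)).roots = Multiset.map θ Finset.univ.val)
    (i : Fin n) : eval (θ i) ((pisotPoly n a).map (Int.castRingHom ℂ)) = 0 := by
  rw [pisot_fac n a θ hn hθ, eval_prod]
  exact Finset.prod_eq_zero (Finset.mem_univ i) (by simp)

lemma pisot_prod_eq_neg_one (hn : 1 < n)
    (hθ : ((pisotPoly n a).map (Int.castRingHom ℂ)).roots = Multiset.map θ Finset.univ.val) :
    ∏ i, θ i = -1 := by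
  have hmon : ((pisotPoly n a).map (Int.castRingHom ℂ)).Monic := (pisot_monic _ hn a).map _
  have hsp : ((pisotPoly n a).map (Int.castRingHom ℂ)).Splits :=
    IsAlgClosed.splits _
  have h := hsp.coeff_zero_eq_prod_roots_of_monic hmon
  have h0 : (pisotPoly n a).coeff 0 = (-1)^(n+1) := by
    rw [pisot_coeff _ hn a]; simp [(show ¬((0:ℕ) = n) by omega)]
  rw [hθ, Monic.natDegree_map (pisot_monic _ hn a), pisot_natDegree _ hn a, coeff_map, h0] at h
  simp only [map_pow, map_neg, map_one] at h
  have hprod : (Multiset.map θ Finset.univ.val).prod = ∏ i, θ i := rfl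
  rw [hprod] at h
  have h2 : (-1:ℂ)^n * ∏ i, θ i = (-1:ℂ)^n * (-1) := by
    rw [← h, pow_succ]
  exact mul_left_cancel₀ (pow_ne_zero _ (by norm_num)) h2
end

section
variable (n : ℕ) (a : ℕ → ℤ) (θ : Fin n → ℂ)

lemma pisot_ne_zero (hn : 1 < n)
    (hθ : ((pisotPoly n a).map (Int.castRingHom ℂ)).roots = Multiset.map θ Finset.univ.val)
    (i : Fin n) : θ i ≠ 0 := by
  intro h0
  have h := pisot_root n a θ hn hθ i
  rw [h0] at h
  rw [← coeff_zero_eq_eval_zero, coeff_map] at h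
  have h2 : (pisotPoly n a).coeff 0 = (-1)^(n+1) := by
    rw [pisot_coeff _ hn a]; simp [(show ¬((0:ℕ) = n) by omega)]
  rw [h2] at h
  simp only [map_pow, map_neg, map_one] at h
  exact pow_ne_zero _ (by norm_num : (-1:ℂ) ≠ 0) h

lemma pisot_structure (hn : 1 < n)
    (ha : (∑ i ∈ Finset.Ico 1 (n - 1), |a i|) + 2 < |a (n - 1)|)
    (hθ : ((pisotPoly n a).map (Int.castRingHom ℂ)).roots = Multiset.map θ Finset.univ.val) :
    ∃ i₀ : Fin n, 1 < ‖θ i₀‖ ∧ ∀ j, j ≠ i₀ → ‖θ j‖ < 1 := by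
  have hprodn : ∏ i, ‖θ i‖ = 1 := by
    have h := pisot_prod_eq_neg_one n a θ hn hθ
    have h2 : ‖∏ i, θ i‖ = 1 := by rw [h]; simp
    rw [← h2]
    exact (norm_prod _ _).symm
  have hne1 : ∀ i, ‖θ i‖ ≠ 1 := fun i =>
    pisot_root_norm_ne_one n a hn ha _ (pisot_root n a θ hn hθ i)
  have hex : ∃ i₀ : Fin n, 1 < ‖θ i₀‖ := by
    by_contra hcon
    push_neg at hcon
    have hlt : ∀ i : Fin n, ‖θ i‖ < 1 := fun i => lt_of_le_of_ne (hcon i) (hne1 i)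
    have hpos : ∀ i ∈ Finset.univ, (0:ℝ) < ‖θ i‖ := fun i _ =>
      norm_pos_iff.mpr (pisot_ne_zero n a θ hn hθ i)
    have hne : (Finset.univ : Finset (Fin n)).Nonempty :=
      ⟨⟨0, by omega⟩, Finset.mem_univ _⟩
    have := Finset.prod_lt_prod_of_nonempty hpos (fun i _ => hlt i) hne
    rw [hprodn, Finset.prod_const_one] at this
    exact lt_irrefl _ this
  obtain ⟨i₀, hi₀⟩ := hex
  refine ⟨i₀, hi₀, fun j hj => ?_⟩
  set g : Polynomial ℂ := ∏ i ∈ Finset.univ.erase i₀, (X - C (θ i)) with hg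
  have hfac : (pisotPoly n a).map (Int.castRingHom ℂ) = (X - C (θ i₀)) * g := by
    rw [pisot_fac n a θ hn hθ, hg, ← Finset.mul_prod_erase _ _ (Finset.mem_univ i₀)]
  have hgz : g.eval (θ j) = 0 := by
    rw [hg, eval_prod]
    exact Finset.prod_eq_zero (Finset.mem_erase.mpr ⟨hj, Finset.mem_univ j⟩) (by simp)
  exact pisot_cofactor_small n a hn ha _ g hfac hi₀ _ hgz
end

lemma multiset_prod_lt_one (s : Multiset ℝ) (hne : s ≠ 0) (h : ∀ x ∈ s, 0 ≤ x ∧ x < 1) :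
    s.prod < 1 := by
  induction s using Multiset.induction_on with
  | empty => simp at hne
  | cons x s ih =>
    rw [Multiset.prod_cons]
    have hx := h x (Multiset.mem_cons_self _ _)
    rcases eq_or_ne s 0 with rfl | hs
    · simpa using hx.2
    · have hsp := ih hs (fun y hy => h y (Multiset.mem_cons_of_mem hy))
      have hsp0 : 0 ≤ s.prod := Multiset.prod_nonneg (fun y hy => (h y (Multiset.mem_cons_of_mem hy)).1)
      nlinarith [hx.1, hx.2]

section
variable (n : ℕ) (a : ℕ → ℤ) (θ : Fin n → ℂ)

lemma pisot_factor_contra (hn : 1 < n)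
    (hθ : ((pisotPoly n a).map (Int.castRingHom ℂ)).roots = Multiset.map θ Finset.univ.val)
    (i₀ : Fin n) (hbig : 1 < ‖θ i₀‖) (hsmall : ∀ j, j ≠ i₀ → ‖θ j‖ < 1)
    (f g : Polynomial ℤ) (hfg : pisotPoly n a = f * g) (hdf : 1 ≤ f.natDegree)
    (hf0 : (f.map (Int.castRingHom ℂ)).eval (θ i₀) ≠ 0) : False := by
  set fc := f.map (Int.castRingHom ℂ) with hfc
  set gc := g.map (Int.castRingHom ℂ) with hgc
  have hQ : (pisotPoly n a).map (Int.castRingHom ℂ) = fc * gc := by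
    rw [hfg, Polynomial.map_mul]
  -- leading coefficients
  have hlc : f.leadingCoeff * g.leadingCoeff = 1 := by
    have := pisot_monic n hn a
    rw [Monic, hfg, leadingCoeff_mul] at this
    exact this
  have hlcu : IsUnit f.leadingCoeff := IsUnit.of_mul_eq_one _ hlc
  have hf_ne : f ≠ 0 := fun h => by simp [h] at hlc
  -- constant coefficients
  have hc0 : f.coeff 0 * g.coeff 0 = (-1)^(n+1) := by
    have h2 : (pisotPoly n a).coeff 0 = (-1)^(n+1) := by
      rw [pisot_coeff _ hn a]; simp [(show ¬((0:ℕ) = n) by omega)]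
    rw [hfg, mul_coeff_zero] at h2
    exact h2
  have hc0u : IsUnit (f.coeff 0) :=
    isUnit_of_dvd_unit ⟨g.coeff 0, hc0.symm⟩ ((isUnit_one.neg).pow _)
  -- norms
  have hinj : Function.Injective (Int.castRingHom ℂ) := fun x y h => by
    have : ((x : ℤ) : ℂ) = ((y : ℤ) : ℂ) := h
    exact_mod_cast this
  have hdegfc : fc.natDegree = f.natDegree := natDegree_map_eq_of_injective hinj f
  have hlcfc : ‖fc.leadingCoeff‖ = 1 := by
    rcases Int.isUnit_iff.mp hlcu with h | h <;>
      rw [hfc, leadingCoeff, hdegfc, coeff_map,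
        show f.coeff f.natDegree = f.leadingCoeff from rfl, h] <;> simp
  have hc0fc : ‖fc.coeff 0‖ = 1 := by
    rcases Int.isUnit_iff.mp hc0u with h | h <;>
      rw [hfc, coeff_map, h] <;> simp
  -- roots of fc are small
  have hroots_small : ∀ r ∈ fc.roots, 0 ≤ ‖r‖ ∧ ‖r‖ < 1 := by
    intro r hr
    refine ⟨norm_nonneg _, ?_⟩
    have hfr : fc.eval r = 0 := (mem_roots'.mp hr).2
    have hQr : ((pisotPoly n a).map (Int.castRingHom ℂ)).eval r = 0 := by
      rw [hQ, eval_mul, hfr, zero_mul]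
    have hQne : (pisotPoly n a).map (Int.castRingHom ℂ) ≠ 0 :=
      ((pisot_monic n hn a).map _).ne_zero
    have hrmem : r ∈ ((pisotPoly n a).map (Int.castRingHom ℂ)).roots :=
      mem_roots'.mpr ⟨hQne, hQr⟩
    rw [hθ, Multiset.mem_map] at hrmem
    obtain ⟨j, _, hj⟩ := hrmem
    rcases eq_or_ne j i₀ with rfl | hji
    · exact absurd (hj ▸ hfr) hf0
    · exact hj ▸ hsmall j hji
  -- fc splits; write as product over roots
  have hsp : fc.Splits := IsAlgClosed.splits _
  have hfcne : fc ≠ 0 := fun h => hf_ne (Polynomial.map_eq_zero_iff hinj |>.mp h)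
  have hcard : fc.roots.card = f.natDegree := by
    rw [← hdegfc]; exact (splits_iff_card_roots.mp hsp)
  have hrne : fc.roots ≠ 0 := by
    intro h; rw [h] at hcard; simp at hcard; omega
  have hprodform := hsp.eq_prod_roots
  have heval0 : fc.coeff 0 = fc.leadingCoeff * (fc.roots.map (fun r => -r)).prod := by
    conv_lhs => rw [coeff_zero_eq_eval_zero, hprodform]
    rw [eval_mul, eval_C, eval_multiset_prod, Multiset.map_map]
    congr 1
    refine congrArg Multiset.prod (Multiset.map_congr rfl fun r _ => ?_)
    simp
  have hnorm1 : (fc.roots.map (fun r => ‖r‖)).prod = 1 := by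
    have h := congrArg norm heval0
    rw [norm_mul, hlcfc, hc0fc, one_mul,
      show ‖(fc.roots.map (fun r => -r)).prod‖ = ((fc.roots.map (fun r => -r)).map (fun z : ℂ => ‖z‖)).prod from
        ((Multiset.prod_hom _ (normHom.toMonoidHom : ℂ →* ℝ)).symm : _),
      Multiset.map_map] at h
    simp only [Function.comp, norm_neg] at h
    exact h.symm
  have hlt := multiset_prod_lt_one (fc.roots.map (fun r => ‖r‖))
    (fun h => hrne (by simpa using h))
    (fun x hx => by
      rw [Multiset.mem_map] at hx
      obtain ⟨r, hr, rfl⟩ := hx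
      exact hroots_small r hr)
  rw [hnorm1] at hlt
  exact lt_irrefl _ hlt
end

section
variable (n : ℕ) (a : ℕ → ℤ) (θ : Fin n → ℂ)

lemma pisot_irreducible_int (hn : 1 < n)
    (ha : (∑ i ∈ Finset.Ico 1 (n - 1), |a i|) + 2 < |a (n - 1)|)
    (hθ : ((pisotPoly n a).map (Int.castRingHom ℂ)).roots = Multiset.map θ Finset.univ.val) :
    Irreducible (pisotPoly n a) := by
  obtain ⟨i₀, hbig, hsmall⟩ := pisot_structure n a θ hn ha hθ
  constructor
  · intro hu
    have := natDegree_eq_zero_of_isUnit hu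
    rw [pisot_natDegree _ hn a] at this
    omega
  · intro f g hfg
    by_contra hcon
    push_neg at hcon
    obtain ⟨hfu, hgu⟩ := hcon
    have hlc : f.leadingCoeff * g.leadingCoeff = 1 := by
      have := pisot_monic n hn a
      rw [Monic, hfg, leadingCoeff_mul] at this
      exact this
    have hdf : 1 ≤ f.natDegree := by
      rcases Nat.eq_zero_or_pos f.natDegree with h0 | h1
      · exfalso
        apply hfu
        rw [eq_C_of_natDegree_eq_zero h0]
        refine isUnit_C.mpr (IsUnit.of_mul_eq_one g.leadingCoeff ?_)
        rw [← hlc]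
        congr 1
        rw [leadingCoeff, h0]
      · exact h1
    have hdg : 1 ≤ g.natDegree := by
      rcases Nat.eq_zero_or_pos g.natDegree with h0 | h1
      · exfalso
        apply hgu
        rw [eq_C_of_natDegree_eq_zero h0]
        refine isUnit_C.mpr (IsUnit.of_mul_eq_one f.leadingCoeff ?_)
        rw [← hlc, mul_comm]
        congr 1
        rw [leadingCoeff, h0]
      · exact h1
    set fc := f.map (Int.castRingHom ℂ) with hfc
    set gc := g.map (Int.castRingHom ℂ) with hgc
    have hQ : (pisotPoly n a).map (Int.castRingHom ℂ) = fc * gc := by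
      rw [hfg, Polynomial.map_mul]
    have hr := pisot_root n a θ hn hθ i₀
    rw [hQ, eval_mul, mul_eq_zero] at hr
    have hnot_both : ¬ (fc.eval (θ i₀) = 0 ∧ gc.eval (θ i₀) = 0) := by
      rintro ⟨h1, h2⟩
      obtain ⟨f₁, hf₁⟩ := (dvd_iff_isRoot.mpr h1 : (X - C (θ i₀)) ∣ fc)
      have hfac2 : (pisotPoly n a).map (Int.castRingHom ℂ) = (X - C (θ i₀)) * (f₁ * gc) := by
        rw [hQ, hf₁, mul_assoc]
      have := pisot_cofactor_small n a hn ha _ _ hfac2 hbig (θ i₀)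
        (by rw [eval_mul, h2, mul_zero])
      linarith
    rcases hr with h1 | h2
    · have hg0 : gc.eval (θ i₀) ≠ 0 := fun h => hnot_both ⟨h1, h⟩
      exact pisot_factor_contra n a θ hn hθ i₀ hbig hsmall g f
        (by rw [hfg, mul_comm]) hdg hg0
    · have hf0 : fc.eval (θ i₀) ≠ 0 := fun h => hnot_both ⟨h, h2⟩
      exact pisot_factor_contra n a θ hn hθ i₀ hbig hsmall f g hfg hdf hf0

lemma pisot_irreducible_rat (hn : 1 < n)
    (ha : (∑ i ∈ Finset.Ico 1 (n - 1), |a i|) + 2 < |a (n - 1)|)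
    (hθ : ((pisotPoly n a).map (Int.castRingHom ℂ)).roots = Multiset.map θ Finset.univ.val) :
    Irreducible ((pisotPoly n a).map (Int.castRingHom ℚ)) :=
  (Polynomial.IsPrimitive.Int.irreducible_iff_irreducible_map_cast
    (pisot_monic n hn a).isPrimitive).mp
    (pisot_irreducible_int n a θ hn ha hθ)
end

section
variable (n : ℕ) (a : ℕ → ℤ) (θ : Fin n → ℂ)

lemma pisot_perm (hn : 1 < n)
    (ha : (∑ i ∈ Finset.Ico 1 (n - 1), |a i|) + 2 < |a (n - 1)|)
    (hθ : ((pisotPoly n a).map (Int.castRingHom ℂ)).roots = Multiset.map θ Finset.univ.val)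
    (hinj : Function.Injective θ) (j i₀ : Fin n) :
    ∃ π : Fin n → Fin n, Function.Bijective π ∧ π j = i₀ ∧
      ∀ d : Fin n → ℤ, (∏ i, θ i ^ d i) = 1 → (∏ i, θ (π i) ^ d i) = 1 := by
  set P' := (pisotPoly n a).map (Int.castRingHom ℚ) with hP'
  have hirr : Irreducible P' := pisot_irreducible_rat n a θ hn ha hθ
  set K := P'.SplittingField with hK
  haveI : Algebra.IsAlgebraic ℚ K := Algebra.IsAlgebraic.of_finite ℚ K
  set e : K →ₐ[ℚ] ℂ := IsAlgClosed.lift with he_def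
  have he : Function.Injective e := e.toRingHom.injective
  have hQQ : P'.map (algebraMap ℚ ℂ) = (pisotPoly n a).map (Int.castRingHom ℂ) := by
    rw [hP', map_map]
    congr 1
  have hP'ne : P' ≠ 0 := ((pisot_monic n hn a).map _).ne_zero
  have hsplitK : (P'.map (algebraMap ℚ K)).Splits := SplittingField.splits P'
  have hcorr : Multiset.map θ Finset.univ.val = (P'.aroots K).map e := by
    have h1 : ((P'.map (algebraMap ℚ K)).map (e : K →+* ℂ)).roots
        = (P'.map (algebraMap ℚ K)).roots.map (e : K →+* ℂ) :=
      hsplitK.roots_map (e : K →+* ℂ)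
    have h2 : (P'.map (algebraMap ℚ K)).map (e : K →+* ℂ) = P'.map (algebraMap ℚ ℂ) := by
      rw [map_map, e.comp_algebraMap]
    rw [h2, hQQ, hθ] at h1
    exact h1
  have hrex : ∀ i : Fin n, ∃ x, x ∈ P'.aroots K ∧ e x = θ i := by
    intro i
    have : θ i ∈ Multiset.map θ Finset.univ.val :=
      Multiset.mem_map.mpr ⟨i, Finset.mem_univ_val i, rfl⟩
    rw [hcorr] at this
    obtain ⟨x, hx1, hx2⟩ := Multiset.mem_map.mp this
    exact ⟨x, hx1, hx2⟩
  choose r hr1 hr2 using hrex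
  have hrroot : ∀ i, Polynomial.aeval (r i) P' = 0 := by
    intro i
    have h := hr1 i
    rw [mem_roots', IsRoot] at h
    rw [aeval_def, ← eval_map]
    exact h.2
  have hrinj : Function.Injective r := by
    intro i i' h
    apply hinj
    rw [← hr2 i, ← hr2 i', h]
  have hmp : ∀ i, P' * C P'.leadingCoeff⁻¹ = minpoly ℚ (r i) := fun i =>
    minpoly.eq_of_irreducible hirr (hrroot i)
  haveI : Normal ℚ K := SplittingField.instNormal P'
  have horb : r i₀ ∈ MulAction.orbit (K ≃ₐ[ℚ] K) (r j) := by
    rw [← Normal.minpoly_eq_iff_mem_orbit]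
    rw [← hmp i₀, ← hmp j]
  obtain ⟨σ, hσ⟩ := horb
  have hσ' : σ (r j) = r i₀ := hσ
  have hroot2 : ∀ i, Polynomial.aeval (e (σ (r i))) P' = 0 := by
    intro i
    have h := Polynomial.aeval_algHom_apply σ.toAlgHom (r i) P'
    rw [hrroot i, map_zero] at h
    rw [Polynomial.aeval_algHom_apply e, show (Polynomial.aeval (σ (r i))) P' = (0:K) from h,
      map_zero]
  have hπex : ∀ i : Fin n, ∃ j', θ j' = e (σ (r i)) := by
    intro i
    have hmem : e (σ (r i)) ∈ ((pisotPoly n a).map (Int.castRingHom ℂ)).roots := by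
      rw [← hQQ]
      refine mem_roots'.mpr ⟨by rwa [Ne, Polynomial.map_eq_zero], ?_⟩
      rw [IsRoot, eval_map, ← aeval_def]
      exact hroot2 i
    rw [hθ, Multiset.mem_map] at hmem
    obtain ⟨j', _, hj'⟩ := hmem
    exact ⟨j', hj'⟩
  choose π hπ using hπex
  have hπinj : Function.Injective π := by
    intro i i' h
    have : e (σ (r i)) = e (σ (r i')) := by rw [← hπ i, ← hπ i', h]
    exact hrinj (σ.injective (he this))
  refine ⟨π, (Finite.injective_iff_bijective).mp hπinj, ?_, ?_⟩
  · apply hinj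
    rw [hπ j, hσ', hr2 i₀]
  · intro d hd
    have h1 : (∏ i, (r i) ^ d i) = 1 := by
      apply he
      rw [map_prod, map_one]
      calc ∏ i, e ((r i) ^ d i) = ∏ i, (e (r i)) ^ d i := by
            refine Finset.prod_congr rfl fun i _ => ?_
            exact map_zpow₀ e _ _
      _ = ∏ i, θ i ^ d i := by
            refine Finset.prod_congr rfl fun i _ => ?_
            rw [hr2 i]
      _ = 1 := hd
    have h2 : (∏ i, (σ (r i)) ^ d i) = 1 := by
      have := congrArg σ h1
      rw [map_prod, map_one] at this
      rw [← this]
      refine Finset.prod_congr rfl fun i _ => ?_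
      exact (map_zpow₀ (σ : K →+* K) _ _).symm
    calc ∏ i, θ (π i) ^ d i = ∏ i, (e (σ (r i))) ^ d i := by
          refine Finset.prod_congr rfl fun i _ => ?_
          rw [hπ i]
    _ = e (∏ i, (σ (r i)) ^ d i) := by
          rw [map_prod]
          exact Finset.prod_congr rfl fun i _ => (map_zpow₀ e _ _).symm
    _ = 1 := by rw [h2, map_one]
end

section
variable (n : ℕ) (a : ℕ → ℤ) (θ : Fin n → ℂ)

lemma pisot_theta_inj (hn : 1 < n)
    (ha : (∑ i ∈ Finset.Ico 1 (n - 1), |a i|) + 2 < |a (n - 1)|)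
    (hθ : ((pisotPoly n a).map (Int.castRingHom ℂ)).roots = Multiset.map θ Finset.univ.val) :
    Function.Injective θ := by
  have hirr := pisot_irreducible_rat n a θ hn ha hθ
  have hsep : ((pisotPoly n a).map (Int.castRingHom ℚ)).Separable := hirr.separable
  have hsep2 : (((pisotPoly n a).map (Int.castRingHom ℚ)).map (algebraMap ℚ ℂ)).Separable :=
    hsep.map
  have hQQ : ((pisotPoly n a).map (Int.castRingHom ℚ)).map (algebraMap ℚ ℂ)
      = (pisotPoly n a).map (Int.castRingHom ℂ) := by
    rw [map_map]; congr 1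
  rw [hQQ] at hsep2
  have hnodup := nodup_roots hsep2
  rw [hθ] at hnodup
  intro i i' h
  exact Multiset.inj_on_of_nodup_map hnodup i (Finset.mem_univ_val i) i'
    (Finset.mem_univ_val i') h

theorem pisot_main (hn : 1 < n)
    (ha : (∑ i ∈ Finset.Ico 1 (n - 1), |a i|) + 2 < |a (n - 1)|)
    (hθ : ((pisotPoly n a).map (Int.castRingHom ℂ)).roots = Multiset.map θ Finset.univ.val) :
    (∏ i, θ i) = -1 ∧
      ∀ d : Fin n → ℤ, (∏ i, θ i ^ d i) = 1 → ∃ z : ℤ, ∀ i, d i = 2 * z := by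
  refine ⟨pisot_prod_eq_neg_one n a θ hn hθ, ?_⟩
  intro d hd
  obtain ⟨i₀, hbig, hsmall⟩ := pisot_structure n a θ hn ha hθ
  have hinj := pisot_theta_inj n a θ hn ha hθ
  have hne0 : ∀ i, θ i ≠ 0 := pisot_ne_zero n a θ hn hθ
  have hpos : ∀ i, (0:ℝ) < ‖θ i‖ := fun i => norm_pos_iff.mpr (hne0 i)
  set L : Fin n → ℝ := fun i => Real.log ‖θ i‖ with hL
  have hLsum : ∑ i, L i = 0 := by
    have h1 : ∏ i, ‖θ i‖ = 1 := by
      rw [← norm_prod, pisot_prod_eq_neg_one n a θ hn hθ]; simp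
    have h2 := Real.log_prod (s := Finset.univ) (f := fun i => ‖θ i‖) (fun i _ => (hpos i).ne')
    rw [h1, Real.log_one] at h2
    exact h2.symm
  obtain ⟨j, -, hjmax⟩ := Finset.exists_max_image Finset.univ d ⟨i₀, Finset.mem_univ _⟩
  obtain ⟨π, hbij, hπj, hrel⟩ := pisot_perm n a θ hn ha hθ hinj j i₀
  have hd2 := hrel d hd
  have h4 : ∑ i, (d i : ℝ) * L (π i) = 0 := by
    have h3 := congrArg norm hd2
    rw [norm_prod, norm_one] at h3
    simp_rw [norm_zpow] at h3
    have h5 := Real.log_prod (s := Finset.univ) (f := fun i => ‖θ (π i)‖ ^ d i)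
      (fun i _ => zpow_ne_zero _ (hpos (π i)).ne')
    rw [h3, Real.log_one] at h5
    have h6 : ∀ i : Fin n, Real.log (‖θ (π i)‖ ^ d i) = (d i : ℝ) * L (π i) := fun i =>
      Real.log_zpow _ _
    rw [← Finset.sum_congr rfl (fun i _ => h6 i)]
    exact h5.symm
  have hLperm : ∑ i, L (π i) = 0 := by
    rw [Function.Bijective.sum_comp hbij L]
    exact hLsum
  have hkey : ∑ i, ((d j : ℝ) - d i) * L (π i) = 0 := by
    have : ∑ i, ((d j : ℝ) - d i) * L (π i)
        = (d j : ℝ) * (∑ i, L (π i)) - ∑ i, (d i : ℝ) * L (π i) := by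
      rw [Finset.mul_sum, ← Finset.sum_sub_distrib]
      exact Finset.sum_congr rfl fun i _ => by ring
    rw [this, hLperm, h4, mul_zero, sub_zero]
  have hterms : ∀ i ∈ Finset.univ, ((d j : ℝ) - d i) * L (π i) ≤ 0 := by
    intro i _
    rcases eq_or_ne i j with rfl | hij
    · simp
    · have hπi : π i ≠ i₀ := fun h => hij (hbij.injective (h.trans hπj.symm))
      have hLneg : L (π i) < 0 := Real.log_neg (hpos (π i)) (hsmall (π i) hπi)
      have hdd : (0:ℝ) ≤ (d j : ℝ) - d i := by
        have := hjmax i (Finset.mem_univ i)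
        have : (d i : ℝ) ≤ d j := by exact_mod_cast this
        linarith
      exact mul_nonpos_of_nonneg_of_nonpos hdd hLneg.le
  have hall : ∀ i, d i = d j := by
    intro i
    rcases eq_or_ne i j with rfl | hij
    · rfl
    · have h0 := (Finset.sum_eq_zero_iff_of_nonpos hterms).mp hkey i (Finset.mem_univ i)
      have hπi : π i ≠ i₀ := fun h => hij (hbij.injective (h.trans hπj.symm))
      have hLneg : L (π i) < 0 := Real.log_neg (hpos (π i)) (hsmall (π i) hπi)
      have : (d j : ℝ) - d i = 0 := by
        rcases mul_eq_zero.mp h0 with h | h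
        · exact h
        · exact absurd h hLneg.ne
      have : (d j : ℝ) = d i := by linarith
      exact_mod_cast this.symm
  -- all exponents equal d j; now parity
  have hDd : (∏ i, θ i ^ d j) = 1 := by
    rw [← hd]
    exact Finset.prod_congr rfl fun i _ => by rw [hall i]
  have hD : ((-1 : ℂ)) ^ (d j) = 1 := by
    rw [← pisot_prod_eq_neg_one n a θ hn hθ, ← Finset.prod_zpow]
    exact hDd
  rcases Int.even_or_odd (d j) with he | ho
  · obtain ⟨z, hz⟩ := he
    exact ⟨z, fun i => by rw [hall i, hz]; ring⟩
  · exfalso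
    rw [ho.neg_one_zpow] at hD
    norm_num at hD
end

/-- Let `θ_1, …, θ_n ∈ ℂ` be the roots of `p` (with `|a_{n-1}| > |a_{n-2}| + ⋯ + |a_1| + 2`).
Then `θ_1 ⋯ θ_n = -1`, and if `θ_1^{d_1} ⋯ θ_n^{d_n} = 1` for integers `d_i`, then all the
`d_i` are equal to one common even integer `2z`. -/
theorem pisotPoly_prod_roots_eq_neg_one_and_rigidity (n : ℕ) (hn : 1 < n) (a : ℕ → ℤ)
    (ha : (∑ i ∈ Finset.Ico 1 (n - 1), |a i|) + 2 < |a (n - 1)|)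
    (θ : Fin n → ℂ)
    (hθ : ((pisotPoly n a).map (Int.castRingHom ℂ)).roots = Multiset.map θ Finset.univ.val) :
    (∏ i, θ i) = -1 ∧
      ∀ d : Fin n → ℤ, (∏ i, θ i ^ d i) = 1 → ∃ z : ℤ, ∀ i, d i = 2 * z :=
  pisot_main n a θ hn ha hθ
end

section
/- Let F = FreeGroup ℕ with generators x_0, x_1, x_2, ... and let φ : F →* F be the homomorphism (via FreeGroup.lift) determined by φ(x_0) = x_0 and φ(x_{i+1}) = x_i * x_{i+1}. Then for every n ≥ 1 and every x ∈ γ_n(F) there exists y ∈ γ_n(F) such that x and y * φ(y)⁻¹ are congruent modulo γ_{n+1}(F), i.e., y * φ(y)⁻¹ * x⁻¹ ∈ γ_{n+1}(F). -/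
/-- The endomorphism `φ` of `F = FreeGroup ℕ` determined by `φ(x_0) = x_0` and
`φ(x_{i+1}) = x_i * x_{i+1}`. -/
noncomputable def phiFree : FreeGroup ℕ →* FreeGroup ℕ :=
  FreeGroup.lift fun i =>
    match i with
    | 0 => FreeGroup.of 0
    | Nat.succ j => FreeGroup.of j * FreeGroup.of (j + 1)

namespace PhiFreeAux

open scoped commutatorElement

abbrev F : Type := FreeGroup ℕ

abbrev L (n : ℕ) : Subgroup F := (⊤ : Subgroup F).lowerCentralSeries n

/-- The "down shift" endomorphism: `x_0 ↦ 1`, `x_{i+1} ↦ x_i`. -/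
noncomputable def dShift : F →* F :=
  FreeGroup.lift fun i =>
    match i with
    | 0 => 1
    | Nat.succ j => FreeGroup.of j

@[simp] lemma phiFree_of_zero : phiFree (FreeGroup.of 0) = FreeGroup.of 0 := by
  simp [phiFree]

@[simp] lemma phiFree_of_succ (j : ℕ) :
    phiFree (FreeGroup.of (j + 1)) = FreeGroup.of j * FreeGroup.of (j + 1) := by
  simp [phiFree]

@[simp] lemma dShift_of_zero : dShift (FreeGroup.of 0) = 1 := by
  simp [dShift]

@[simp] lemma dShift_of_succ (j : ℕ) : dShift (FreeGroup.of (j + 1)) = FreeGroup.of j := by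
  simp [dShift]

lemma L_succ (n : ℕ) : L (n + 1) = ⁅L n, ⊤⁆ := rfl

/-- basic commutator membership in the next term of the lower central series -/
lemma mem_L_succ_comm {n : ℕ} {a : F} (ha : a ∈ L n) (g : F) : ⁅a, g⁆ ∈ L (n + 1) :=
  Subgroup.commutator_mem_commutator ha (Subgroup.mem_top g)

/-- images of `L m` are central in `F ⧸ L (m+1)`. -/
lemma central_image (m : ℕ) {z : F} (hz : z ∈ L m) (q : F ⧸ L (m + 1)) :
    Commute ((QuotientGroup.mk' (L (m + 1))) z) q := by
  induction q using QuotientGroup.induction_on with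
  | H g =>
    show (QuotientGroup.mk' (L (m+1))) z * _ = _
    rw [QuotientGroup.mk'_apply, ← QuotientGroup.mk_mul, ← QuotientGroup.mk_mul,
      QuotientGroup.eq]
    have h1 : ⁅g⁻¹, z⁻¹⁆ ∈ L (m + 1) := by
      rw [← commutatorElement_inv]
      exact inv_mem (mem_L_succ_comm (inv_mem hz) g⁻¹)
    have h2 : (z * g)⁻¹ * (g * z) = ⁅g⁻¹, z⁻¹⁆ := by
      simp only [commutatorElement_def]; group
    rw [h2]; exact h1

lemma comm_mul_left {G : Type*} [Group G] (u v w : G) (h : ∀ q, Commute ⁅v, w⁆ q) :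
    ⁅u * v, w⁆ = ⁅u, w⁆ * ⁅v, w⁆ := by
  have h1 : u * ⁅v, w⁆ * u⁻¹ = ⁅v, w⁆ := by
    rw [mul_assoc, (h u⁻¹).eq, ← mul_assoc, mul_inv_cancel, one_mul]
  have key : ⁅u * v, w⁆ = u * ⁅v, w⁆ * u⁻¹ * ⁅u, w⁆ := by
    simp only [commutatorElement_def]; group
  rw [key, h1]; exact (h _).eq

lemma comm_mul_right {G : Type*} [Group G] (u v w : G) (h : ∀ q, Commute ⁅u, w⁆ q) :
    ⁅u, v * w⁆ = ⁅u, v⁆ * ⁅u, w⁆ := by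
  have h1 : v * ⁅u, w⁆ * v⁻¹ = ⁅u, w⁆ := by
    rw [mul_assoc, (h v⁻¹).eq, ← mul_assoc, mul_inv_cancel, one_mul]
  have key : ⁅u, v * w⁆ = ⁅u, v⁆ * (v * ⁅u, w⁆ * v⁻¹) := by
    simp only [commutatorElement_def]; group
  rw [key, h1]

/-- `⁅L n, L 1⁆ ≤ L (n+2)` (special case of `⁅γ_i, γ_j⁆ ≤ γ_{i+j}`). -/
lemma comm_Ln_L1 (n : ℕ) {u k : F} (hu : u ∈ L n) (hk : k ∈ L 1) :
    ⁅u, k⁆ ∈ L (n + 2) := by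
  set N := L (n + 2)
  let π : F →* F ⧸ N := QuotientGroup.mk' N
  have hπsurj : Function.Surjective π := QuotientGroup.mk'_surjective N
  have hmaptop : Subgroup.map π ⊤ = ⊤ := Subgroup.map_top_of_surjective π hπsurj
  have hbot : Subgroup.map π (L (n + 2)) = ⊥ := by
    rw [eq_bot_iff]
    rintro _ ⟨z, hz, rfl⟩
    exact Subgroup.mem_bot.mpr ((QuotientGroup.eq_one_iff z).mpr hz)
  have h1 : ⁅Subgroup.map π (L n), (⊤ : Subgroup (F ⧸ N))⁆ ≤ Subgroup.map π (L (n + 1)) := by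
    rw [← hmaptop, ← Subgroup.map_commutator, ← L_succ]
  have h2 : ⁅Subgroup.map π (L (n + 1)), (⊤ : Subgroup (F ⧸ N))⁆ = ⊥ := by
    rw [← hmaptop, ← Subgroup.map_commutator, ← L_succ]
    exact hbot
  have key1 : ⁅⁅Subgroup.map π (L n), (⊤ : Subgroup (F ⧸ N))⁆, (⊤ : Subgroup (F ⧸ N))⁆ = ⊥ := by
    rw [eq_bot_iff]
    exact le_trans (Subgroup.commutator_mono h1 le_rfl) (le_of_eq h2)
  have key2 : ⁅⁅(⊤ : Subgroup (F ⧸ N)), Subgroup.map π (L n)⁆, (⊤ : Subgroup (F ⧸ N))⁆ = ⊥ := by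
    rw [Subgroup.commutator_comm (⊤ : Subgroup (F ⧸ N))]
    exact key1
  have key : ⁅⁅(⊤ : Subgroup (F ⧸ N)), (⊤ : Subgroup (F ⧸ N))⁆, Subgroup.map π (L n)⁆ = ⊥ :=
    Subgroup.commutator_commutator_eq_bot_of_rotate key2 key1
  have hkents : π k ∈ ⁅(⊤ : Subgroup (F ⧸ N)), (⊤ : Subgroup (F ⧸ N))⁆ := by
    have : π k ∈ Subgroup.map π (L 1) := Subgroup.mem_map_of_mem π hk
    have hL1 : Subgroup.map π (L 1) = ⁅(⊤ : Subgroup (F ⧸ N)), (⊤ : Subgroup (F ⧸ N))⁆ := by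
      have : L 1 = ⁅(⊤ : Subgroup F), ⊤⁆ := by
        rw [L_succ]; rfl
      rw [this, Subgroup.map_commutator, hmaptop]
    rwa [hL1] at this
  have hmem : ⁅π k, π u⁆ ∈ (⊥ : Subgroup (F ⧸ N)) := by
    rw [← key]
    exact Subgroup.commutator_mem_commutator hkents (Subgroup.mem_map_of_mem π hu)
  have : π ⁅u, k⁆ = 1 := by
    rw [map_commutatorElement]
    have := Subgroup.mem_bot.mp hmem
    rw [← commutatorElement_inv, this, inv_one]
  exact (QuotientGroup.eq_one_iff _).mp this

noncomputable def dPow : ℕ → (F →* F)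
  | 0 => MonoidHom.id F
  | k + 1 => (dPow k).comp dShift

lemma dPow_succ_apply (k : ℕ) (g : F) : dPow (k + 1) g = dPow k (dShift g) := rfl

lemma dPow_comm (k : ℕ) (g : F) : dPow k (dShift g) = dShift (dPow k g) := by
  induction k generalizing g with
  | zero => rfl
  | succ k ih =>
    rw [dPow_succ_apply, ih]
    rfl

lemma dPow_eq_one_of_le {K k : ℕ} (h : K ≤ k) {g : F} (hg : dPow K g = 1) :
    dPow k g = 1 := by
  obtain ⟨m, rfl⟩ := Nat.exists_eq_add_of_le h
  induction m with
  | zero => exact hg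
  | succ m ih =>
    have : dPow (K + (m + 1)) g = dPow (K + m + 1) g := by ring_nf
    rw [this, dPow_succ_apply, dPow_comm, ih (Nat.le_add_right K m), map_one]

lemma dPow_of_eq_one {i k : ℕ} (h : i < k) : dPow k (FreeGroup.of i) = 1 := by
  induction k generalizing i with
  | zero => omega
  | succ k ih =>
    rw [dPow_succ_apply]
    cases i with
    | zero => rw [dShift_of_zero, map_one]
    | succ j =>
      rw [dShift_of_succ]
      exact ih (by omega)

lemma dPow_event (g : F) : ∃ K, dPow K g = 1 := by
  induction g using FreeGroup.induction_on with
  | C1 => exact ⟨0, map_one _⟩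
  | of i =>
    have hp : (pure i : F) = FreeGroup.of i := rfl
    exact ⟨i + 1, by exact dPow_of_eq_one (Nat.lt_succ_self i)⟩
  | inv_of i _ =>
    refine ⟨i + 1, ?_⟩
    have hp : (pure i : F) = FreeGroup.of i := rfl
    rw [map_inv, dPow_of_eq_one (Nat.lt_succ_self i), inv_one]
  | mul u v hu hv =>
    obtain ⟨K₁, h1⟩ := hu
    obtain ⟨K₂, h2⟩ := hv
    refine ⟨max K₁ K₂, ?_⟩
    rw [map_mul, dPow_eq_one_of_le (le_max_left K₁ K₂) h1,
      dPow_eq_one_of_le (le_max_right K₁ K₂) h2, one_mul]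

/-- modulo the commutator subgroup, `φ(x) = d(x) * x`. -/
lemma phi_eq_d_mul_ab (x : F) : phiFree x * (dShift x * x)⁻¹ ∈ L 1 := by
  have hhom : ((Abelianization.of).comp phiFree : F →* Abelianization F)
      = ((Abelianization.of).comp dShift) * Abelianization.of := by
    apply FreeGroup.ext_hom
    intro i
    cases i with
    | zero => simp
    | succ j => simp
  have h := DFunLike.congr_fun hhom x
  simp only [MonoidHom.comp_apply, MonoidHom.mul_apply] at h
  have h1 : Abelianization.of (phiFree x * (dShift x * x)⁻¹) = 1 := by
    rw [map_mul, map_inv, map_mul, h]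
    group
  exact (QuotientGroup.eq_one_iff _).mp h1

lemma quot_iff (m : ℕ) (x y : F) :
    y * (phiFree y)⁻¹ * x⁻¹ ∈ L (m + 1) ↔
      (QuotientGroup.mk' (L (m + 1))) y * ((QuotientGroup.mk' (L (m + 1))) (phiFree y))⁻¹
        = (QuotientGroup.mk' (L (m + 1))) x := by
  rw [← QuotientGroup.eq_one_iff (y * (phiFree y)⁻¹ * x⁻¹)]
  simp only [QuotientGroup.mk_mul, QuotientGroup.mk_inv, QuotientGroup.mk'_apply]
  exact mul_inv_eq_one

/-- The set of `x` that are `y * φ(y)⁻¹` for some `y ∈ L n`, modulo `L (n+1)`,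
as a subgroup. -/
noncomputable def Sgrp (n : ℕ) : Subgroup F where
  carrier := {x | ∃ y ∈ L n,
    (QuotientGroup.mk' (L (n + 1))) y * ((QuotientGroup.mk' (L (n + 1))) (phiFree y))⁻¹
      = (QuotientGroup.mk' (L (n + 1))) x}
  one_mem' := ⟨1, one_mem _, by rw [map_one, map_one, map_one, inv_one, mul_one]⟩
  mul_mem' := by
    rintro x w ⟨y, hy, hxy⟩ ⟨z, hz, hzw⟩
    refine ⟨y * z, mul_mem hy hz, ?_⟩
    set π := QuotientGroup.mk' (L (n + 1)) with hπ
    have hφz : phiFree z ∈ L n :=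
      Subgroup.lowerCentralSeries.map phiFree n (Subgroup.mem_map_of_mem _ hz)
    have hcw : ∀ q, Commute (π w) q := by
      intro q
      rw [← hzw]
      exact ((central_image n hz q).mul_left ((central_image n hφz q).inv_left))
    calc π (y * z) * (π (phiFree (y * z)))⁻¹
        = π y * (π z * (π (phiFree z))⁻¹) * (π (phiFree y))⁻¹ := by
          rw [map_mul, map_mul, map_mul]; group
      _ = π y * π w * (π (phiFree y))⁻¹ := by rw [hzw]
      _ = π y * (π (phiFree y))⁻¹ * π w := by
          rw [mul_assoc, (hcw _).eq, ← mul_assoc]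
      _ = π (x * w) := by rw [hxy, map_mul]
  inv_mem' := by
    rintro x ⟨y, hy, hxy⟩
    refine ⟨y⁻¹, inv_mem hy, ?_⟩
    set π := QuotientGroup.mk' (L (n + 1)) with hπ
    have hcy := central_image n hy
    calc π y⁻¹ * (π (phiFree y⁻¹))⁻¹
        = (π y)⁻¹ * π (phiFree y) := by rw [map_inv, map_inv, map_inv, inv_inv]
      _ = (π y * (π (phiFree y))⁻¹)⁻¹ := by
          rw [mul_inv_rev, inv_inv]
          exact ((hcy _).inv_left).eq
      _ = π x⁻¹ := by rw [hxy, map_inv]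

lemma mem_Sgrp {n : ℕ} {x : F} :
    x ∈ Sgrp n ↔ ∃ y ∈ L n, y * (phiFree y)⁻¹ * x⁻¹ ∈ L (n + 1) := by
  constructor <;> rintro ⟨y, hy, h⟩ <;> exact ⟨y, hy, by
    first
      | exact (quot_iff n x y).mpr h
      | exact (quot_iff n x y).mp h⟩

lemma core (n : ℕ)
    (hsur : ∀ x ∈ L n, ∃ y ∈ L n, y * (phiFree y)⁻¹ * x⁻¹ ∈ L (n + 1)) :
    ∀ (K : ℕ) (g : F), dPow K g = 1 → ∀ a ∈ L n, ⁅a, g⁆ ∈ Sgrp (n + 1) := by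
  intro K
  induction K with
  | zero =>
    intro g hg a _
    have hg1 : g = 1 := hg
    rw [hg1, commutatorElement_one_right]
    exact one_mem _
  | succ K ihK =>
    intro g hg a ha
    obtain ⟨b, hb, hba⟩ := hsur a ha
    have hφb : phiFree b ∈ L n :=
      Subgroup.lowerCentralSeries.map phiFree n (Subgroup.mem_map_of_mem _ hb)
    have hdg : dPow K ((dShift g)⁻¹) = 1 := by
      rw [map_inv, show dPow K (dShift g) = dPow (K + 1) g from rfl, hg, inv_one]
    have he : ⁅phiFree b, (dShift g)⁻¹⁆ ∈ Sgrp (n + 1) := ihK _ hdg _ hφb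
    suffices hs : ⁅a, g⁆ * ⁅phiFree b, (dShift g)⁻¹⁆ ∈ Sgrp (n + 1) by
      have h2 := mul_mem hs (inv_mem he)
      rwa [mul_inv_cancel_right] at h2
    refine mem_Sgrp.mpr ⟨⁅b, g⁆, mem_L_succ_comm hb g, ?_⟩
    rw [quot_iff]
    set π := QuotientGroup.mk' (L (n + 1 + 1)) with hπ
    have hπ1 : ∀ z ∈ L (n + 2), π z = 1 := fun z hz =>
      (QuotientGroup.eq_one_iff z).mpr hz
    have hC : ∀ u, u ∈ L n → ∀ q r : F ⧸ L (n + 1 + 1), Commute ⁅π u, q⁆ r := by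
      intro u hu q r
      induction q using QuotientGroup.induction_on with
      | H v =>
        have h3 : (⁅π u, ((v : F ⧸ L (n + 1 + 1)))⁆) = π ⁅u, v⁆ := by
          rw [map_commutatorElement]
          rfl
        rw [h3]
        exact central_image (n + 1) (mem_L_succ_comm hu v) r
    have hka : dShift g * g * (phiFree g)⁻¹ ∈ L 1 := by
      have h4 := inv_mem (phi_eq_d_mul_ab g)
      simpa [mul_assoc] using h4
    have hK1 : ∀ u, u ∈ L n → ⁅π u, π (dShift g * g * (phiFree g)⁻¹)⁆ = 1 := by
      intro u hu
      rw [← map_commutatorElement]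
      exact hπ1 _ (comm_Ln_L1 n hu hka)
    have hZc : ∀ q, Commute (π (b * (phiFree b)⁻¹ * a⁻¹)) q :=
      central_image (n + 1) hba
    have hBeq : π b = π (b * (phiFree b)⁻¹ * a⁻¹) * (π a * π (phiFree b)) := by
      rw [← map_mul, ← map_mul]
      congr 1
      group
    have hGeq : π g = (π (dShift g))⁻¹ *
        (π (dShift g * g * (phiFree g)⁻¹) * π (phiFree g)) := by
      rw [← map_inv, ← map_mul, ← map_mul]
      congr 1
      group
    have step2 : ⁅π (phiFree b), π g⁆ =
        ⁅π (phiFree b), (π (dShift g))⁻¹⁆ * ⁅π (phiFree b), π (phiFree g)⁆ := by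
      calc ⁅π (phiFree b), π g⁆
          = ⁅π (phiFree b), (π (dShift g))⁻¹ *
              (π (dShift g * g * (phiFree g)⁻¹) * π (phiFree g))⁆ := by rw [← hGeq]
        _ = ⁅π (phiFree b), (π (dShift g))⁻¹⁆ *
              ⁅π (phiFree b), π (dShift g * g * (phiFree g)⁻¹) * π (phiFree g)⁆ :=
            comm_mul_right _ _ _ (fun q => by rw [← map_mul]; exact hC _ hφb _ q)
        _ = ⁅π (phiFree b), (π (dShift g))⁻¹⁆ *
              (⁅π (phiFree b), π (dShift g * g * (phiFree g)⁻¹)⁆ *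
                ⁅π (phiFree b), π (phiFree g)⁆) := by
            rw [comm_mul_right _ _ _ (fun q => hC _ hφb _ q)]
        _ = ⁅π (phiFree b), (π (dShift g))⁻¹⁆ * ⁅π (phiFree b), π (phiFree g)⁆ := by
            rw [hK1 _ hφb, one_mul]
    have step1 : ⁅π b, π g⁆ = ⁅π a, π g⁆ * ⁅π (phiFree b), π g⁆ := by
      calc ⁅π b, π g⁆
          = ⁅π (b * (phiFree b)⁻¹ * a⁻¹) * (π a * π (phiFree b)), π g⁆ := by rw [← hBeq]
        _ = ⁅π (b * (phiFree b)⁻¹ * a⁻¹), π g⁆ * ⁅π a * π (phiFree b), π g⁆ :=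
            comm_mul_left _ _ _ (fun q => by
              rw [← map_mul]; exact hC _ (mul_mem ha hφb) _ q)
        _ = ⁅π a * π (phiFree b), π g⁆ := by
            rw [(hZc _).commutator_eq, one_mul]
        _ = ⁅π a, π g⁆ * ⁅π (phiFree b), π g⁆ :=
            comm_mul_left _ _ _ (fun q => hC _ hφb _ q)
    simp only [map_commutatorElement, map_mul, map_inv]
    rw [step1, step2]
    group

end PhiFreeAux

open PhiFreeAux
open scoped commutatorElement

/-- For every `n` and every `x ∈ lowerCentralSeries F n` (that is, `x ∈ γ_{n+1}(F)`),
there is `y ∈ lowerCentralSeries F n` such that `x` and `y * φ(y)⁻¹` are congruent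
modulo `lowerCentralSeries F (n+1)`. -/
theorem phiFree_surjective_mod_lowerCentralSeries (n : ℕ) (x : FreeGroup ℕ)
    (hx : x ∈ (⊤ : Subgroup (FreeGroup ℕ)).lowerCentralSeries n) :
    ∃ y ∈ (⊤ : Subgroup (FreeGroup ℕ)).lowerCentralSeries n,
      y * (phiFree y)⁻¹ * x⁻¹ ∈ (⊤ : Subgroup (FreeGroup ℕ)).lowerCentralSeries (n + 1) := by
  induction n generalizing x with
  | zero =>
    have h0 : (⊤ : Subgroup F) ≤ Sgrp 0 := by
      rw [← FreeGroup.closure_range_of ℕ]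
      refine (Subgroup.closure_le _).mpr ?_
      rintro _ ⟨i, rfl⟩
      refine mem_Sgrp.mpr ⟨(FreeGroup.of (i + 1))⁻¹, Subgroup.mem_top _, ?_⟩
      have h5 : (FreeGroup.of (i + 1))⁻¹ * (phiFree (FreeGroup.of (i + 1))⁻¹)⁻¹ *
          (FreeGroup.of i)⁻¹ = ⁅(FreeGroup.of (i + 1))⁻¹, FreeGroup.of i⁆ := by
        rw [map_inv, phiFree_of_succ]
        simp only [commutatorElement_def]
        group
      rw [h5, L_succ 0]
      exact Subgroup.commutator_mem_commutator (Subgroup.mem_top _) (Subgroup.mem_top _)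
    exact mem_Sgrp.mp (h0 (Subgroup.mem_top x))
  | succ n ih =>
    have hle : L (n + 1) ≤ Sgrp (n + 1) := by
      rw [L_succ]
      refine Subgroup.commutator_le.mpr ?_
      intro a ha g _
      obtain ⟨K, hK⟩ := dPow_event g
      exact core n ih K g hK a ha
    exact mem_Sgrp.mp (hle hx)
end
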